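/- Let 0 ≤ r₁ < r₂ be real numbers and let w ∈ ℂ with |w| < r₂. Then there exists a continuous 1-periodic loop γ : ℝ → ℂ such that r₁ < |γ(t)| < r₂ for every t ∈ ℝ and ∫₀¹ γ(t) dt = w. That is, every point of the open disk of radius r₂ is the average of a loop with values in the open annulus A(r₁, r₂). -/

import Mathlib

open Complex Real

noncomputable def eLoop (t : ℝ) : ℂ := Complex.exp ((2 * Real.pi * t : ℝ) * Complex.I)

lemma eLoop_abs (t : ℝ) : ‖eLoop t‖ = 1 := Complex.norm_exp_ofReal_mul_I _

lemma eLoop_ne_zero (t : ℝ) : eLoop t ≠ 0 := Complex.exp_ne_zero _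

lemma eLoop_continuous : Continuous eLoop := by unfold eLoop; fun_prop

lemma eLoop_hasDerivAt (t : ℝ) :
    HasDerivAt eLoop (eLoop t * (2 * Real.pi * Complex.I)) t := by
  have h1 : HasDerivAt (fun t : ℝ => 2 * Real.pi * t) (2 * Real.pi) t := by
    simpa using (hasDerivAt_id t).const_mul (2 * Real.pi)
  have h2 := ((h1.ofReal_comp).mul_const Complex.I).cexp
  refine h2.congr_deriv ?_
  unfold eLoop
  push_cast
  ring

lemma eLoop_periodic (t : ℝ) : eLoop (t + 1) = eLoop t := by
  unfold eLoop
  have : ((2 * Real.pi * (t + 1) : ℝ) : ℂ) * Complex.I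
      = (2 * Real.pi * t : ℝ) * Complex.I + 2 * Real.pi * Complex.I := by
    push_cast; ring
  rw [this, Complex.exp_add, Complex.exp_two_pi_mul_I, mul_one]

lemma eLoop_zero : eLoop 0 = 1 := by simp [eLoop]

lemma eLoop_one : eLoop 1 = 1 := by
  have := eLoop_periodic 0
  simpa [eLoop_zero] using this

lemma eLoop_conj (t : ℝ) : (starRingEnd ℂ) (eLoop t) = (eLoop t)⁻¹ := by
  unfold eLoop
  rw [← Complex.exp_conj, ← Complex.exp_neg]
  congr 1
  rw [map_mul, Complex.conj_ofReal, Complex.conj_I]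
  ring

lemma denom_ne (b : ℂ) (hb : ‖b‖ < 1) (t : ℝ) : 1 + b * eLoop t ≠ 0 := by
  intro h
  have h1 : b * eLoop t = -1 := by linear_combination h
  have h2 : ‖b * eLoop t‖ = ‖b‖ := by
    rw [norm_mul, eLoop_abs, mul_one]
  rw [h1] at h2
  simp at h2
  linarith

lemma denom_slit (b : ℂ) (hb : ‖b‖ < 1) (t : ℝ) :
    1 + b * eLoop t ∈ Complex.slitPlane := by
  left
  have habs : ‖b * eLoop t‖ < 1 := by
    rw [norm_mul, eLoop_abs, mul_one]; exact hb
  have hre : |(b * eLoop t).re| < 1 :=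
    lt_of_le_of_lt (Complex.abs_re_le_norm _) habs
  have heq : (1 + b * eLoop t).re = 1 + (b * eLoop t).re := by simp
  rw [heq]
  cases abs_lt.mp hre with
  | intro h1 h2 => linarith

lemma blaschke_integral (a : ℂ) (ha : ‖a‖ < 1) :
    (∫ t in (0:ℝ)..1, (eLoop t + a) / (1 + (starRingEnd ℂ) a * eLoop t)) = a := by
  set b := (starRingEnd ℂ) a with hbdef
  have hb : ‖b‖ < 1 := by rwa [hbdef, Complex.norm_conj]
  have hne : ∀ t : ℝ, 1 + b * eLoop t ≠ 0 := denom_ne b hb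
  have hcont : Continuous fun t => (eLoop t + a) / (1 + b * eLoop t) :=
    (eLoop_continuous.add continuous_const).div
      (continuous_const.add (continuous_const.mul eLoop_continuous)) hne
  have hne2 : (2 * Real.pi * Complex.I : ℂ) ≠ 0 := by
    simp [Complex.I_ne_zero, Real.pi_ne_zero]
  by_cases haz : a = 0
  · subst haz
    simp only [hbdef, map_zero, zero_mul, add_zero, div_one]
    have key : ∀ t ∈ Set.uIcc (0:ℝ) 1,
        HasDerivAt (fun t => eLoop t / (2 * Real.pi * Complex.I)) (eLoop t) t := by
      intro t _
      have := (eLoop_hasDerivAt t).div_const (2 * Real.pi * Complex.I)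
      rwa [mul_div_assoc, div_self hne2, mul_one] at this
    rw [intervalIntegral.integral_eq_sub_of_hasDerivAt key
      (eLoop_continuous.intervalIntegrable 0 1)]
    simp [eLoop_one, eLoop_zero]
  · have hbz : b ≠ 0 := by simp [hbdef, haz]
    set k : ℂ := (1 - a * b) / (2 * Real.pi * Complex.I * b) with hk
    have key : ∀ t ∈ Set.uIcc (0:ℝ) 1,
        HasDerivAt (fun t : ℝ => a * t + k * Complex.log (1 + b * eLoop t))
          ((eLoop t + a) / (1 + b * eLoop t)) t := by
      intro t _
      have h1 : HasDerivAt (fun t : ℝ => a * (t : ℂ)) a t := by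
        simpa using ((hasDerivAt_id t).ofReal_comp).const_mul a
      have h2 : HasDerivAt (fun t : ℝ => 1 + b * eLoop t)
          (b * (eLoop t * (2 * Real.pi * Complex.I))) t :=
        ((eLoop_hasDerivAt t).const_mul b).const_add 1
      have h3 := (h2.clog_real (denom_slit b hb t)).const_mul k
      have h4 := h1.add h3
      refine h4.congr_deriv ?_
      rw [hk]
      field_simp [hne t]
      ring
    rw [intervalIntegral.integral_eq_sub_of_hasDerivAt key (hcont.intervalIntegrable 0 1)]
    simp [eLoop_one, eLoop_zero]

theorem average_of_annulus_loop (r₁ r₂ : ℝ) (hr₁ : 0 ≤ r₁) (hr : r₁ < r₂)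
    (w : ℂ) (hw : ‖w‖ < r₂) :
    ∃ γ : ℝ → ℂ, Continuous γ ∧ (∀ t : ℝ, γ (t + 1) = γ t) ∧
      (∀ t : ℝ, r₁ < ‖γ t‖ ∧ ‖γ t‖ < r₂) ∧
      (∫ t in (0:ℝ)..1, γ t) = w := by
  set ρ : ℝ := (max r₁ (‖w‖) + r₂) / 2 with hρ
  have hmax : max r₁ (‖w‖) < r₂ := max_lt hr hw
  have hρ1 : r₁ < ρ := by
    have := le_max_left r₁ (‖w‖)
    simp only [hρ]; linarith
  have hρw : ‖w‖ < ρ := by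
    have := le_max_right r₁ (‖w‖)
    simp only [hρ]; linarith
  have hρ2 : ρ < r₂ := by simp only [hρ]; linarith
  have hρpos : 0 < ρ := lt_of_le_of_lt hr₁ hρ1
  set a : ℂ := w / ρ with hadef
  have ha : ‖a‖ < 1 := by
    rw [hadef, norm_div, Complex.norm_real, Real.norm_eq_abs, abs_of_pos hρpos, div_lt_one hρpos]
    exact hρw
  set b : ℂ := (starRingEnd ℂ) a with hbdef
  have hb : ‖b‖ < 1 := by rwa [hbdef, Complex.norm_conj]
  have hne : ∀ t : ℝ, 1 + b * eLoop t ≠ 0 := denom_ne b hb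
  refine ⟨fun t => (ρ : ℂ) * ((eLoop t + a) / (1 + b * eLoop t)), ?_, ?_, ?_, ?_⟩
  · exact continuous_const.mul ((eLoop_continuous.add continuous_const).div
      (continuous_const.add (continuous_const.mul eLoop_continuous)) hne)
  · intro t; simp only [eLoop_periodic]
  · intro t
    have h5 : (starRingEnd ℂ) (1 + b * eLoop t) = (eLoop t)⁻¹ * (eLoop t + a) := by
      rw [map_add, map_one, map_mul, hbdef, Complex.conj_conj, eLoop_conj]
      field_simp [eLoop_ne_zero t]
    have h6 : ‖1 + b * eLoop t‖ = ‖eLoop t + a‖ := by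
      rw [← Complex.norm_conj, h5, norm_mul, norm_inv, eLoop_abs]
      simp
    have h7 : ‖(ρ : ℂ) * ((eLoop t + a) / (1 + b * eLoop t))‖ = ρ := by
      rw [norm_mul, norm_div, ← h6, div_self, Complex.norm_real, Real.norm_eq_abs,
        abs_of_pos hρpos, mul_one]
      exact norm_ne_zero_iff.mpr (hne t)
    rw [h7]
    exact ⟨hρ1, hρ2⟩
  · rw [intervalIntegral.integral_const_mul, blaschke_integral a ha, hadef]
    rw [mul_div_assoc']
    exact mul_div_cancel_left₀ w (Complex.ofReal_ne_zero.mpr hρpos.ne')
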